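/- At a fixed point it is not possible to improve either the clusters or the centers: let f : ℝ^d × ℝ^d → [0,∞) be convex and differentiable in its first argument and order-preserving with respect to Euclidean distance, let ρ ≥ 1, and let (x*, C*) ∈ ℝ^{Kmd} × C_{m,K,D} be a fixed point of DGC-F_ρ, i.e., C* ∈ U_{x*} and ∇_x J_ρ(x*, C*) = 0. Then J_ρ(x*, C*) ≤ J_ρ(x, C*) for every x ∈ ℝ^{Kmd}, and J_ρ(x*, C*) ≤ J_ρ(x*, C) for every clustering C ∈ C_{m,K,D}. -/

import Mathlib

open Filter Finset
open scoped RealInnerProductSpace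

private lemma grad_ineq' {E : Type*} [NormedAddCommGroup E] [InnerProductSpace ℝ E]
    [CompleteSpace E]
    {f : E → ℝ} {G z : E} (hc : ConvexOn ℝ Set.univ f) (hg : HasGradientAt f G z) (w : E) :
    f z + ⟪G, w - z⟫ ≤ f w := by
  set g : ℝ → ℝ := fun t => f (t • (w - z) + z) with hgdef
  have hgc : ConvexOn ℝ Set.univ g := by
    have := hc.comp_affineMap (AffineMap.lineMap z w : ℝ →ᵃ[ℝ] E)
    simpa [g, Function.comp_def, AffineMap.lineMap_apply] using this
  have hline : HasDerivAt (fun t : ℝ => t • (w - z) + z) (w - z) 0 := by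
    simpa using ((hasDerivAt_id (0:ℝ)).smul_const (w - z)).add_const z
  have hd : HasDerivAt g ⟪G, w - z⟫ 0 := by
    have hfd : HasFDerivAt f ((InnerProductSpace.toDual ℝ E) G) ((0:ℝ) • (w - z) + z) := by
      simpa using hg.hasFDerivAt
    have := hfd.comp_hasDerivAt (0:ℝ) hline
    simp only [InnerProductSpace.toDual_apply_apply] at this
    exact this
  have hs := hgc.le_slope_of_hasDerivAt (Set.mem_univ 0) (Set.mem_univ 1) one_pos hd
  have hslope : slope g 0 1 = g 1 - g 0 := by simp [slope_def_field]
  have h0 : g 0 = f z := by simp [g]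
  have h1 : g 1 = f w := by simp [g]
  rw [hslope, h0, h1] at hs
  linarith

private lemma nbhd_swap' {m : ℕ} (G : SimpleGraph (Fin m)) [DecidableRel G.Adj]
    (F : Fin m → Fin m → ℝ) :
    ∑ i, ∑ j ∈ G.neighborFinset i, F i j = ∑ i, ∑ j ∈ G.neighborFinset i, F j i := by
  simp only [SimpleGraph.neighborFinset_eq_filter, Finset.sum_filter]
  rw [Finset.sum_comm]
  refine Finset.sum_congr rfl fun i _ => Finset.sum_congr rfl fun j _ => ?_
  by_cases h : G.Adj i j
  · simp [h, G.adj_symm h]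
  · have h2 : ¬ G.Adj j i := fun h' => h (G.adj_symm h')
    simp [h, h2]

/-- The relaxed distributed clustering objective `J_ρ(x, C)`. Clusterings are encoded as
assignment maps `C i : Fin (N i) → Fin K` sending each local data point to its cluster. -/
noncomputable def Jrho {d m K : ℕ} (G : SimpleGraph (Fin m)) [DecidableRel G.Adj]
    {N : Fin m → ℕ} (y : (i : Fin m) → Fin (N i) → EuclideanSpace ℝ (Fin d))
    (f : EuclideanSpace ℝ (Fin d) → EuclideanSpace ℝ (Fin d) → ℝ) (ρ : ℝ)
    (x : Fin m → Fin K → EuclideanSpace ℝ (Fin d))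
    (C : (i : Fin m) → Fin (N i) → Fin K) : ℝ :=
  ∑ i, ∑ k,
    ((1 / 2) * ∑ j ∈ G.neighborFinset i, ‖x i k - x j k‖ ^ 2
      + (1 / ρ) * ∑ r ∈ Finset.univ.filter (fun r => C i r = k), f (x i k) (y i r))

/-- `C ∈ U_x`: every data point is assigned to a nearest center. -/
def inU {d m K : ℕ} {N : Fin m → ℕ}
    (y : (i : Fin m) → Fin (N i) → EuclideanSpace ℝ (Fin d))
    (x : Fin m → Fin K → EuclideanSpace ℝ (Fin d))
    (C : (i : Fin m) → Fin (N i) → Fin K) : Prop :=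
  ∀ (i : Fin m) (r : Fin (N i)) (l : Fin K), ‖x i (C i r) - y i r‖ ≤ ‖x i l - y i r‖

/-- `∇_x J_ρ(x, C) = 0`, stated blockwise: the partial gradient of `J_ρ(·, C)` with respect
to each center block `x_i(k)`, namely
`2 ∑_{j ∈ N_i} (x_i(k) - x_j(k)) + (1/ρ) ∑_{r ∈ C_i(k)} ∇_x f(x_i(k), y_{i,r})`,
vanishes; here `f'` is the gradient of the loss `f` in its first argument. -/
def gradJZero {d m K : ℕ} (G : SimpleGraph (Fin m)) [DecidableRel G.Adj]
    {N : Fin m → ℕ} (y : (i : Fin m) → Fin (N i) → EuclideanSpace ℝ (Fin d))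
    (f' : EuclideanSpace ℝ (Fin d) → EuclideanSpace ℝ (Fin d) → EuclideanSpace ℝ (Fin d))
    (ρ : ℝ) (x : Fin m → Fin K → EuclideanSpace ℝ (Fin d))
    (C : (i : Fin m) → Fin (N i) → Fin K) : Prop :=
  ∀ (i : Fin m) (k : Fin K),
    (2 : ℝ) • (∑ j ∈ G.neighborFinset i, (x i k - x j k))
      + (1 / ρ) • (∑ r ∈ Finset.univ.filter (fun r => C i r = k), f' (x i k) (y i r)) = 0

/-- **At a fixed point, neither the centers nor the clusters can be improved.** If `f` is
convex and differentiable in its first argument (with values in `[0,∞)`) and order-preserving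
with respect to the Euclidean distance, `ρ ≥ 1`, and `(x⋆, C⋆)` is a fixed point of DGC-F_ρ
(i.e. `C⋆ ∈ U_{x⋆}` and `∇_x J_ρ(x⋆, C⋆) = 0`), then `J_ρ(x⋆, C⋆) ≤ J_ρ(x, C⋆)` for all
centers `x` and `J_ρ(x⋆, C⋆) ≤ J_ρ(x⋆, C)` for all clusterings `C`. -/
theorem fixed_point_no_improvement
    (d m K : ℕ)
    (G : SimpleGraph (Fin m)) [DecidableRel G.Adj]
    (N : Fin m → ℕ) (y : (i : Fin m) → Fin (N i) → EuclideanSpace ℝ (Fin d))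
    (f : EuclideanSpace ℝ (Fin d) → EuclideanSpace ℝ (Fin d) → ℝ)
    (f' : EuclideanSpace ℝ (Fin d) → EuclideanSpace ℝ (Fin d) → EuclideanSpace ℝ (Fin d))
    (hf_nonneg : ∀ x y', 0 ≤ f x y')
    (hf_convex : ∀ y', ConvexOn ℝ Set.univ (fun x => f x y'))
    (hf_grad : ∀ z y', HasGradientAt (fun x => f x y') (f' z y') z)
    (hf_ord_lt : ∀ x z y', ‖x - y'‖ < ‖z - y'‖ → f x y' < f z y')
    (hf_ord_eq : ∀ x z y', ‖x - y'‖ = ‖z - y'‖ → f x y' = f z y')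
    (ρ : ℝ) (hρ : 1 ≤ ρ)
    (xs : Fin m → Fin K → EuclideanSpace ℝ (Fin d))
    (Cs : (i : Fin m) → Fin (N i) → Fin K)
    (hU : inU y xs Cs) (hgz : gradJZero G y f' ρ xs Cs) :
    (∀ x : Fin m → Fin K → EuclideanSpace ℝ (Fin d),
        Jrho G y f ρ xs Cs ≤ Jrho G y f ρ x Cs) ∧
    (∀ C : (i : Fin m) → Fin (N i) → Fin K,
        Jrho G y f ρ xs Cs ≤ Jrho G y f ρ xs C) := by
  have hρ0 : (0:ℝ) ≤ 1 / ρ := div_nonneg zero_le_one (by linarith)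
  constructor
  · -- centers cannot be improved
    intro x
    have quad : ∀ a b : EuclideanSpace ℝ (Fin d),
        ‖b‖ ^ 2 + 2 * ⟪b, a - b⟫ ≤ ‖a‖ ^ 2 := by
      intro a b
      have h := norm_add_sq_real b (a - b)
      have e : b + (a - b) = a := by abel
      rw [e] at h
      nlinarith [sq_nonneg ‖a - b‖]
    set Sig : ℝ := ∑ i, ∑ k,
        ((∑ j ∈ G.neighborFinset i,
            ⟪xs i k - xs j k, (x i k - xs i k) - (x j k - xs j k)⟫)
          + (1 / ρ) * ∑ r ∈ Finset.univ.filter (fun r => Cs i r = k),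
              ⟪f' (xs i k) (y i r), x i k - xs i k⟫) with hSigDef
    have main : Jrho G y f ρ xs Cs + Sig ≤ Jrho G y f ρ x Cs := by
      simp only [Jrho, hSigDef]
      rw [← Finset.sum_add_distrib]
      refine Finset.sum_le_sum fun i _ => ?_
      rw [← Finset.sum_add_distrib]
      refine Finset.sum_le_sum fun k _ => ?_
      have hA : ∑ j ∈ G.neighborFinset i,
          (‖xs i k - xs j k‖ ^ 2
            + 2 * ⟪xs i k - xs j k, (x i k - xs i k) - (x j k - xs j k)⟫)
          ≤ ∑ j ∈ G.neighborFinset i, ‖x i k - x j k‖ ^ 2 := by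
        refine Finset.sum_le_sum fun j _ => ?_
        have e : (x i k - xs i k) - (x j k - xs j k)
            = (x i k - x j k) - (xs i k - xs j k) := by abel
        rw [e]
        exact quad _ _
      have hB : ∑ r ∈ Finset.univ.filter (fun r => Cs i r = k),
          (f (xs i k) (y i r) + ⟪f' (xs i k) (y i r), x i k - xs i k⟫)
          ≤ ∑ r ∈ Finset.univ.filter (fun r => Cs i r = k), f (x i k) (y i r) := by
        refine Finset.sum_le_sum fun r _ => ?_
        exact grad_ineq' (hf_convex (y i r)) (hf_grad (xs i k) (y i r)) (x i k)
      simp only [Finset.sum_add_distrib, ← Finset.mul_sum] at hA hB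
      have h1 := mul_le_mul_of_nonneg_left hA (by norm_num : (0:ℝ) ≤ 1 / 2)
      have h2 := mul_le_mul_of_nonneg_left hB hρ0
      rw [mul_add] at h1 h2
      linarith
    have hSig : Sig = 0 := by
      rw [hSigDef, Finset.sum_comm]
      refine Finset.sum_eq_zero fun k _ => ?_
      rw [Finset.sum_add_distrib]
      have t1 : ∑ i, ∑ j ∈ G.neighborFinset i,
          ⟪xs i k - xs j k, (x i k - xs i k) - (x j k - xs j k)⟫
          = ∑ i, ⟪(2:ℝ) • ∑ j ∈ G.neighborFinset i, (xs i k - xs j k), x i k - xs i k⟫ := by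
        have hsw := nbhd_swap' G (fun i j => ⟪xs i k - xs j k, x j k - xs j k⟫)
        calc ∑ i, ∑ j ∈ G.neighborFinset i,
              ⟪xs i k - xs j k, (x i k - xs i k) - (x j k - xs j k)⟫
            = ∑ i, ∑ j ∈ G.neighborFinset i,
                (⟪xs i k - xs j k, x i k - xs i k⟫ - ⟪xs i k - xs j k, x j k - xs j k⟫) := by
              simp only [inner_sub_right]
          _ = (∑ i, ∑ j ∈ G.neighborFinset i, ⟪xs i k - xs j k, x i k - xs i k⟫)
              - ∑ i, ∑ j ∈ G.neighborFinset i, ⟪xs i k - xs j k, x j k - xs j k⟫ := by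
              simp only [Finset.sum_sub_distrib]
          _ = (∑ i, ∑ j ∈ G.neighborFinset i, ⟪xs i k - xs j k, x i k - xs i k⟫)
              - ∑ i, ∑ j ∈ G.neighborFinset i, ⟪xs j k - xs i k, x i k - xs i k⟫ := by
              rw [hsw]
          _ = ∑ i, ∑ j ∈ G.neighborFinset i,
                (⟪xs i k - xs j k, x i k - xs i k⟫ - ⟪xs j k - xs i k, x i k - xs i k⟫) := by
              simp only [Finset.sum_sub_distrib]
          _ = ∑ i, ⟪(2:ℝ) • ∑ j ∈ G.neighborFinset i, (xs i k - xs j k), x i k - xs i k⟫ := by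
              refine Finset.sum_congr rfl fun i _ => ?_
              rw [real_inner_smul_left, sum_inner, Finset.mul_sum]
              refine Finset.sum_congr rfl fun j _ => ?_
              have e : xs j k - xs i k = -(xs i k - xs j k) := by abel
              rw [e, inner_neg_left]
              ring
      have t2 : ∀ i, (1 / ρ) * ∑ r ∈ Finset.univ.filter (fun r => Cs i r = k),
          ⟪f' (xs i k) (y i r), x i k - xs i k⟫
          = ⟪(1 / ρ) • ∑ r ∈ Finset.univ.filter (fun r => Cs i r = k),
              f' (xs i k) (y i r), x i k - xs i k⟫ := by
        intro i
        rw [real_inner_smul_left, sum_inner]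
      rw [t1]
      calc (∑ i, ⟪(2:ℝ) • ∑ j ∈ G.neighborFinset i, (xs i k - xs j k), x i k - xs i k⟫)
            + ∑ i, (1 / ρ) * ∑ r ∈ Finset.univ.filter (fun r => Cs i r = k),
                ⟪f' (xs i k) (y i r), x i k - xs i k⟫
          = ∑ i, (⟪(2:ℝ) • ∑ j ∈ G.neighborFinset i, (xs i k - xs j k), x i k - xs i k⟫
              + ⟪(1 / ρ) • ∑ r ∈ Finset.univ.filter (fun r => Cs i r = k),
                  f' (xs i k) (y i r), x i k - xs i k⟫) := by
            rw [← Finset.sum_add_distrib]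
            exact Finset.sum_congr rfl fun i _ => by rw [t2 i]
        _ = 0 := by
            refine Finset.sum_eq_zero fun i _ => ?_
            rw [← inner_add_left, hgz i k, inner_zero_left]
    rw [hSig, add_zero] at main
    exact main
  · -- clusters cannot be improved
    intro C
    simp only [Jrho]
    refine Finset.sum_le_sum fun i _ => ?_
    have key : ∀ A : Fin (N i) → Fin K,
        ∑ k, (1 / ρ) * ∑ r ∈ Finset.univ.filter (fun r => A r = k), f (xs i k) (y i r)
          = (1 / ρ) * ∑ r, f (xs i (A r)) (y i r) := by
      intro A
      rw [← Finset.mul_sum]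
      congr 1
      calc ∑ k, ∑ r ∈ Finset.univ.filter (fun r => A r = k), f (xs i k) (y i r)
          = ∑ k, ∑ r ∈ Finset.univ.filter (fun r => A r = k), f (xs i (A r)) (y i r) :=
            Finset.sum_congr rfl fun k _ => Finset.sum_congr rfl fun r hr => by
              rw [(Finset.mem_filter.1 hr).2]
        _ = ∑ r, f (xs i (A r)) (y i r) := by
            have := Finset.sum_fiberwise_eq_sum_filter Finset.univ Finset.univ A
              (fun r => f (xs i (A r)) (y i r))
            simpa using this
    rw [Finset.sum_add_distrib, Finset.sum_add_distrib, key (Cs i), key (C i)]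
    refine add_le_add le_rfl (mul_le_mul_of_nonneg_left ?_ hρ0)
    refine Finset.sum_le_sum fun r _ => ?_
    rcases (hU i r (C i r)).lt_or_eq with h | h
    · exact (hf_ord_lt _ _ _ h).le
    · exact (hf_ord_eq _ _ _ h).le
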